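/- Let G = GL₂(𝔽₃). The center Z(G) has order 2, and every subgroup of G isomorphic to C₆ contains Z(G). -/
import Mathlib

private def Emat : GL (Fin 2) (ZMod 3) := ⟨!![1,1;0,1], !![1,-1;0,1], by decide, by decide⟩
private def Fmat : GL (Fin 2) (ZMod 3) := ⟨!![1,0;1,1], !![1,0;-1,1], by decide, by decide⟩

set_option maxRecDepth 200000 in
set_option maxHeartbeats 4000000 in
private lemma L2 : ∀ z : GL (Fin 2) (ZMod 3),
    z * Emat = Emat * z → z * Fmat = Fmat * z → z = 1 ∨ z = -1 := by decide

set_option maxRecDepth 200000 in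
set_option maxHeartbeats 4000000 in
private lemma L1 : ∀ x : GL (Fin 2) (ZMod 3),
    x ^ 6 = 1 → x ^ 2 = 1 ∨ x ^ 3 = 1 ∨ x ^ 3 = -1 := by decide

private lemma center_eq :
    Subgroup.center (GL (Fin 2) (ZMod 3)) = Subgroup.zpowers (-1 : GL (Fin 2) (ZMod 3)) := by
  apply le_antisymm
  · intro z hz
    rw [Subgroup.mem_center_iff] at hz
    rcases L2 z (hz Emat).symm (hz Fmat).symm with h | h
    · rw [h]; exact Subgroup.one_mem _
    · rw [h]; exact Subgroup.mem_zpowers _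
  · rw [Subgroup.zpowers_le, Subgroup.mem_center_iff]
    intro g
    rw [mul_neg, neg_mul, mul_one, one_mul]

private lemma my_ord_neg_one : orderOf (-1 : GL (Fin 2) (ZMod 3)) = 2 := by
  apply orderOf_eq_prime
  · rw [neg_one_sq]
  · intro h
    have : ((-1 : GL (Fin 2) (ZMod 3)) : Matrix (Fin 2) (Fin 2) (ZMod 3)) = 1 := by
      rw [h]; rfl
    have h2 := congrFun (congrFun this 0) 0
    simp [Matrix.one_apply] at h2
    exact (by decide : (-1 : ZMod 3) ≠ 1) h2

/-- In GL₂(𝔽₃), the center has order 2 and every subgroup isomorphic to C₆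
contains the center. -/
theorem GL2F3_center_card_and_le_C6 :
    Nat.card (Subgroup.center (GL (Fin 2) (ZMod 3))) = 2 ∧
      ∀ H : Subgroup (GL (Fin 2) (ZMod 3)),
        Nonempty (H ≃* Multiplicative (ZMod 6)) →
          Subgroup.center (GL (Fin 2) (ZMod 3)) ≤ H := by
  constructor
  · rw [center_eq, Nat.card_zpowers, my_ord_neg_one]
  · rintro H ⟨e⟩
    set g : H := e.symm (Multiplicative.ofAdd (1 : ZMod 6)) with hg
    have hord : orderOf g = 6 := by
      have h := orderOf_injective e.symm.toMonoidHom e.symm.injective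
        (Multiplicative.ofAdd (1 : ZMod 6))
      have h2 : orderOf (Multiplicative.ofAdd (1 : ZMod 6)) = 6 := by
        rw [orderOf_ofAdd_eq_addOrderOf, ZMod.addOrderOf_one]
      rw [hg]; exact h.trans h2
    have hx : orderOf ((g : GL (Fin 2) (ZMod 3))) = 6 := by
      rw [Subgroup.orderOf_coe, hord]
    have hx6 : (g : GL (Fin 2) (ZMod 3)) ^ 6 = 1 := by
      rw [← hx]; exact pow_orderOf_eq_one _
    have hx2 : (g : GL (Fin 2) (ZMod 3)) ^ 2 ≠ 1 := by
      intro h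
      have := orderOf_dvd_of_pow_eq_one h
      rw [hx] at this; omega
    have hx3 : (g : GL (Fin 2) (ZMod 3)) ^ 3 ≠ 1 := by
      intro h
      have := orderOf_dvd_of_pow_eq_one h
      rw [hx] at this; omega
    have hneg : (-1 : GL (Fin 2) (ZMod 3)) ∈ H := by
      rcases L1 _ hx6 with h | h | h
      · exact absurd h hx2
      · exact absurd h hx3
      · rw [← h]; exact H.pow_mem g.2 3
    rw [center_eq, Subgroup.zpowers_le]
    exact hneg
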